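/- If T is a rearrangement on symmetrizable functions on ℝⁿ, then for every symmetrizable f and every t > essinf f, the set {x : Tf(x) ≥ t} coincides up to a null set with ∂_T({x : f(x) ≥ t}), where ∂_T A = {x : T(1_A)(x) = 1}. -/

import Mathlib

open MeasureTheory Set

/-- The essential infimum of a real-valued function, computed in `EReal`. -/
noncomputable def essInfE {n : ℕ} (f : EuclideanSpace ℝ (Fin n) → ℝ) : EReal :=
  essInf (fun x => (f x : EReal)) volume

/-- A function `f : ℝⁿ → ℝ` is symmetrizable if it is measurable and every
super-level set `{x | f x > t}` with `t > essinf f` has finite Lebesgue measure. -/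
def Symmetrizable {n : ℕ} (f : EuclideanSpace ℝ (Fin n) → ℝ) : Prop :=
  Measurable f ∧ ∀ t : ℝ, essInfE f < (t : EReal) → volume {x | t < f x} < ⊤

section Aux

variable {n : ℕ}

lemma seq_mem {r c : ℝ} (hrc : r < c) (k : ℕ) :
    r ≤ c - (c - r) / (k + 1) ∧ c - (c - r) / (k + 1) < c := by
  have hk : (0:ℝ) < (k:ℝ) + 1 := by positivity
  have hcr : (0:ℝ) < c - r := by linarith
  constructor
  · have h1 : (c - r) / ((k:ℝ) + 1) ≤ c - r := by
      apply div_le_self hcr.le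
      have : (1:ℝ) ≤ (k:ℝ) + 1 := by
        have : (0:ℝ) ≤ (k:ℝ) := Nat.cast_nonneg k
        linarith
      exact this
    linarith
  · have : 0 < (c - r) / ((k:ℝ) + 1) := by positivity
    linarith

lemma iInter_superlevel {X : Type*} (w : X → ℝ) {r c : ℝ} (hrc : r < c) :
    {x | c ≤ w x} = ⋂ k : ℕ, {x | c - (c - r) / (k + 1) < w x} := by
  ext x
  simp only [mem_setOf_eq, mem_iInter]
  constructor
  · intro h k
    have := (seq_mem hrc k).2
    linarith
  · intro h
    by_contra hc
    push_neg at hc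
    have hd : 0 < c - w x := by linarith
    obtain ⟨k, hk⟩ := exists_nat_gt ((c - r) / (c - w x))
    have hk1 : (c - r) / (c - w x) < (k:ℝ) + 1 := by linarith
    have h2 : (c - r) / ((k:ℝ) + 1) < c - w x := by
      rw [div_lt_iff₀ (by positivity)]
      have := mul_lt_mul_of_pos_right hk1 hd
      rw [div_mul_cancel₀ _ hd.ne'] at this
      linarith [this]
    have := h k
    linarith

lemma measure_superlevel_eq_iInf {w : EuclideanSpace ℝ (Fin n) → ℝ} (hw : Measurable w)
    {r c : ℝ} (hrc : r < c) (hfin : volume {x | r < w x} ≠ ⊤) :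
    volume {x | c ≤ w x} = ⨅ k : ℕ, volume {x | c - (c - r) / (k + 1) < w x} := by
  rw [iInter_superlevel w hrc]
  refine Antitone.measure_iInter ?_ (fun k => (measurableSet_lt measurable_const hw).nullMeasurableSet) ?_
  · intro k k' hkk' x hx
    simp only [mem_setOf_eq] at *
    have hcr : (0:ℝ) ≤ c - r := by linarith
    have h1 : (c - r) / ((k':ℝ) + 1) ≤ (c - r) / ((k:ℝ) + 1) := by
      gcongr

    linarith
  · refine ⟨0, ?_⟩
    have h0 : c - (c - r) / ((0:ℕ) + 1) = r := by norm_num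
    rw [show {x | c - (c - r) / ((0:ℕ) + 1) < w x} = {x | r < w x} by rw [h0]]
    exact hfin

end Aux

section Aux2

open scoped Classical

variable {n : ℕ}
variable (T : (EuclideanSpace ℝ (Fin n) → ℝ) → (EuclideanSpace ℝ (Fin n) → ℝ))

lemma measure_ge_T (hmap : ∀ f, Symmetrizable f → Symmetrizable (T f))
    (hequi : ∀ f, Symmetrizable f → ∀ t : ℝ,
      volume {x | t < T f x} = volume {x | t < f x}) {φ : EuclideanSpace ℝ (Fin n) → ℝ} (hφ : Symmetrizable φ)
    {r c : ℝ} (hrc : r < c) (hfin : volume {x | r < φ x} ≠ ⊤) :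
    volume {x | c ≤ T φ x} = volume {x | c ≤ φ x} := by
  have hTfin : volume {x | r < T φ x} ≠ ⊤ := by rw [hequi φ hφ r]; exact hfin
  rw [measure_superlevel_eq_iInf (hmap φ hφ).1 hrc hTfin,
      measure_superlevel_eq_iInf hφ.1 hrc hfin]
  exact iInf_congr fun k => hequi φ hφ _

lemma plateau_lt {A : Set (EuclideanSpace ℝ (Fin n))} {e : EuclideanSpace ℝ (Fin n) → ℝ}
    {b c r : ℝ} (he : ∀ x, e x ≤ b) (hbr : b ≤ r) (hrc : r < c) :
    {x | r < (A.piecewise (fun _ => c) e) x} = A := by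
  classical
  ext x
  simp only [mem_setOf_eq]
  by_cases hxA : x ∈ A
  · rw [Set.piecewise_eq_of_mem _ _ _ hxA]
    exact iff_of_true hrc hxA
  · rw [Set.piecewise_eq_of_notMem _ _ _ hxA]
    exact iff_of_false (not_lt.mpr (le_trans (he x) hbr)) hxA

lemma plateau_le {A : Set (EuclideanSpace ℝ (Fin n))} {e : EuclideanSpace ℝ (Fin n) → ℝ}
    {b c c' : ℝ} (he : ∀ x, e x ≤ b) (hbc' : b < c') (hc'c : c' ≤ c) :
    {x | c' ≤ (A.piecewise (fun _ => c) e) x} = A := by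
  classical
  ext x
  simp only [mem_setOf_eq]
  by_cases hxA : x ∈ A
  · rw [Set.piecewise_eq_of_mem _ _ _ hxA]
    exact iff_of_true hc'c hxA
  · rw [Set.piecewise_eq_of_notMem _ _ _ hxA]
    exact iff_of_false (not_le.mpr (lt_of_le_of_lt (he x) hbc')) hxA

lemma measure_ge_T_plateau (hmap : ∀ f, Symmetrizable f → Symmetrizable (T f))
    (hequi : ∀ f, Symmetrizable f → ∀ t : ℝ,
      volume {x | t < T f x} = volume {x | t < f x}) {A : Set (EuclideanSpace ℝ (Fin n))}
    {e : EuclideanSpace ℝ (Fin n) → ℝ} {b c c' : ℝ} (he : ∀ x, e x ≤ b)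
    (hφ : Symmetrizable (A.piecewise (fun _ => c) e))
    (hbc' : b < c') (hc'c : c' ≤ c) (hAfin : volume A ≠ ⊤) :
    volume {x | c' ≤ T (A.piecewise (fun _ => c) e) x} = volume A := by
  have hb_lt_c : b < c := lt_of_lt_of_le hbc' hc'c
  have hrfin : volume {x | b < (A.piecewise (fun _ => c) e) x} ≠ ⊤ := by
    rw [plateau_lt he le_rfl hb_lt_c]; exact hAfin
  rw [measure_ge_T T hmap hequi hφ hbc' hrfin, plateau_le he hbc' hc'c]

lemma symmPiece {f : EuclideanSpace ℝ (Fin n) → ℝ} (hf : Symmetrizable f)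
    {A : Set (EuclideanSpace ℝ (Fin n))} (hA : MeasurableSet A) (hAfin : volume A ≠ ⊤)
    {b c : ℝ} (hbc : b ≤ c) :
    Symmetrizable (A.piecewise (fun _ => c) (fun x => min (f x) b)) := by
  classical
  set φ := A.piecewise (fun _ => c) (fun x => min (f x) b) with hφdef
  refine ⟨Measurable.piecewise hA measurable_const (hf.1.min measurable_const), ?_⟩
  intro r hr
  by_cases hrb : b ≤ r
  · have hsub : {x | r < φ x} ⊆ A := by
      intro x hx
      by_contra hxA
      have hx' : φ x = min (f x) b := Set.piecewise_eq_of_notMem _ _ _ hxA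
      simp only [mem_setOf_eq, hx'] at hx
      have := min_le_right (f x) b
      linarith
    exact lt_of_le_of_lt (measure_mono hsub) (lt_top_iff_ne_top.mpr hAfin)
  · push_neg at hrb
    have hflt : essInfE f < (r : EReal) := by
      by_contra hge
      push_neg at hge
      have hae : ∀ᵐ x ∂(volume : Measure (EuclideanSpace ℝ (Fin n))),
          (r : EReal) ≤ (f x : EReal) := by
        filter_upwards [ae_essInf_le (f := fun x => (f x : EReal))
          (μ := (volume : Measure (EuclideanSpace ℝ (Fin n))))] with x hx
        exact le_trans hge hx
      have hle' : (r : EReal) ≤ essInfE φ := by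
        refine le_essInf_of_ae_le _ ?_
        filter_upwards [hae] with x hx
        by_cases hxA : x ∈ A
        · have hx' : φ x = c := Set.piecewise_eq_of_mem _ _ _ hxA
          rw [hx']
          exact_mod_cast le_trans hrb.le hbc
        · have hx' : φ x = min (f x) b := Set.piecewise_eq_of_notMem _ _ _ hxA
          rw [hx']
          have hrf : r ≤ f x := by exact_mod_cast hx
          exact_mod_cast le_min hrf hrb.le
      exact absurd hr (not_lt.mpr hle')
    have hsub : {x | r < φ x} ⊆ A ∪ {x | r < f x} := by
      intro x hx
      by_cases hxA : x ∈ A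
      · exact Or.inl hxA
      · refine Or.inr ?_
        have hx' : φ x = min (f x) b := Set.piecewise_eq_of_notMem _ _ _ hxA
        simp only [mem_setOf_eq, hx'] at hx ⊢
        exact lt_of_lt_of_le hx (min_le_left _ _)
    calc volume {x | r < φ x} ≤ volume A + volume {x | r < f x} :=
          le_trans (measure_mono hsub) (measure_union_le _ _)
      _ < ⊤ := ENNReal.add_lt_top.mpr ⟨lt_top_iff_ne_top.mpr hAfin, hf.2 r hflt⟩

end Aux2

section Aux3

variable {n : ℕ}
variable (T : (EuclideanSpace ℝ (Fin n) → ℝ) → (EuclideanSpace ℝ (Fin n) → ℝ))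

lemma step_main (hmap : ∀ f, Symmetrizable f → Symmetrizable (T f))
    (hmono : ∀ f g, Symmetrizable f → Symmetrizable g →
      f ≤ᵐ[volume] g → T f ≤ᵐ[volume] T g)
    {φ ψ : EuclideanSpace ℝ (Fin n) → ℝ} (hφ : Symmetrizable φ) (hψ : Symmetrizable ψ)
    (hle : φ ≤ᵐ[volume] ψ) {β δ : ℝ} {m : ENNReal} (hm : m ≠ ⊤)
    (h1 : volume {x | β ≤ T φ x} = m) (h2 : volume {x | δ ≤ T ψ x} = m)
    (h3 : volume {x | min β δ ≤ T ψ x} = m) :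
    {x | β ≤ T φ x} =ᵐ[volume] {x | δ ≤ T ψ x} := by
  have hTφ : Measurable (T φ) := (hmap φ hφ).1
  have hTψ : Measurable (T ψ) := (hmap ψ hψ).1
  have e1 : {x | δ ≤ T ψ x} =ᵐ[volume] {x | min β δ ≤ T ψ x} :=
    ae_eq_of_subset_of_measure_ge (fun x hx => le_trans (min_le_right β δ) hx)
      (le_of_eq (h3.trans h2.symm))
      ((measurableSet_le measurable_const hTψ).nullMeasurableSet)
      (by rw [h3]; exact hm)
  have hincl : ∀ᵐ x ∂(volume : Measure (EuclideanSpace ℝ (Fin n))),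
      β ≤ T φ x → min β δ ≤ T ψ x := by
    filter_upwards [hmono φ ψ hφ hψ hle] with x hx hβx
    exact le_trans (min_le_left β δ) (le_trans hβx hx)
  have e2 : {x | β ≤ T φ x} =ᵐ[volume]
      (({x | β ≤ T φ x} ∩ {x | min β δ ≤ T ψ x} : Set (EuclideanSpace ℝ (Fin n)))) := by
    refine Filter.eventuallyEq_set.mpr ?_
    filter_upwards [hincl] with x hx
    simp only [mem_inter_iff, mem_setOf_eq]
    exact ⟨fun h => ⟨h, hx h⟩, fun h => h.1⟩
  have hμ2 : volume ({x | β ≤ T φ x} ∩ {x | min β δ ≤ T ψ x}) = m := by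
    rw [← measure_congr e2, h1]
  have e3 : (({x | β ≤ T φ x} ∩ {x | min β δ ≤ T ψ x} : Set (EuclideanSpace ℝ (Fin n)))) =ᵐ[volume]
      {x | min β δ ≤ T ψ x} :=
    ae_eq_of_subset_of_measure_ge inter_subset_right
      (le_of_eq (h3.trans hμ2.symm))
      (((measurableSet_le measurable_const hTφ).inter
        (measurableSet_le measurable_const hTψ)).nullMeasurableSet)
      (by rw [h3]; exact hm)
  exact (e2.trans e3).trans e1.symm

end Aux3

theorem stmt_5 {n : ℕ}
    (T : (EuclideanSpace ℝ (Fin n) → ℝ) → (EuclideanSpace ℝ (Fin n) → ℝ))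
    (hmap : ∀ f, Symmetrizable f → Symmetrizable (T f))
    (hequi : ∀ f, Symmetrizable f → ∀ t : ℝ,
      volume {x | t < T f x} = volume {x | t < f x})
    (hmono : ∀ f g, Symmetrizable f → Symmetrizable g →
      f ≤ᵐ[volume] g → T f ≤ᵐ[volume] T g)
    (f : EuclideanSpace ℝ (Fin n) → ℝ) (hf : Symmetrizable f)
    (t : ℝ) (ht : essInfE f < (t : EReal)) :
    {x | t ≤ T f x} =ᵐ[volume]
      {x | T (Set.indicator {y | t ≤ f y} 1) x = 1} := by
  classical
  obtain ⟨s, hs1, hs2'⟩ := EReal.exists_between_coe_real ht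
  have hs2 : s < t := by exact_mod_cast hs2'
  set A : Set (EuclideanSpace ℝ (Fin n)) := {y | t ≤ f y} with hAdef
  have hA : MeasurableSet A := measurableSet_le measurable_const hf.1
  have hsfin : volume {x | s < f x} ≠ ⊤ := (hf.2 s hs1).ne
  have hAfin : volume A ≠ ⊤ := by
    refine ne_top_of_le_ne_top hsfin (measure_mono ?_)
    intro x hx
    exact lt_of_lt_of_le hs2 hx
  set m := volume A with hmdef
  set α₀ := min s 0 with hα
  have hα0 : α₀ ≤ 0 := min_le_right _ _
  have hαs : α₀ ≤ s := min_le_left _ _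
  set u : EuclideanSpace ℝ (Fin n) → ℝ := Set.indicator A 1 with hu
  set u' := A.piecewise (fun _ => (1:ℝ)) (fun x => min (f x) α₀) with hu'
  set g' := A.piecewise (fun _ => t) (fun x => min (f x) α₀) with hg'
  set g := A.piecewise (fun _ => t) (fun x => min (f x) s) with hgdef
  -- symmetrizability
  have hu'S : Symmetrizable u' := symmPiece hf hA hAfin (by linarith)
  have hg'S : Symmetrizable g' := symmPiece hf hA hAfin (by linarith)
  have hgS : Symmetrizable g := symmPiece hf hA hAfin hs2.le
  have huS : Symmetrizable u := by
    constructor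
    · rw [hu]
      exact Measurable.indicator measurable_const hA
    · intro r hr
      have h0 : (0 : EReal) ≤ essInfE u := by
        refine le_essInf_of_ae_le _ ?_
        refine Filter.Eventually.of_forall (fun x => ?_)
        have hx : (0:ℝ) ≤ u x := by
          rw [hu]
          exact Set.indicator_nonneg (fun _ _ => zero_le_one) x
        show ((0:ℝ) : EReal) ≤ ((u x : ℝ) : EReal)
        exact_mod_cast hx
      have hrpos : (0:ℝ) < r := by exact_mod_cast lt_of_le_of_lt h0 hr
      have hsub : {x | r < u x} ⊆ A := by
        intro x hx
        by_contra hxA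
        have hx0 : u x = 0 := by rw [hu]; exact Set.indicator_of_notMem hxA 1
        simp only [mem_setOf_eq, hx0] at hx
        linarith
      exact lt_of_le_of_lt (measure_mono hsub) (lt_top_iff_ne_top.mpr hAfin)
  have hueq : u = A.piecewise (fun _ => (1:ℝ)) (fun _ => (0:ℝ)) := by
    funext x
    by_cases hxA : x ∈ A
    · rw [Set.piecewise_eq_of_mem _ _ _ hxA, hu, Set.indicator_of_mem hxA]
      rfl
    · rw [Set.piecewise_eq_of_notMem _ _ _ hxA, hu, Set.indicator_of_notMem hxA]
  -- measure computations
  have M_u : volume {x | (1:ℝ) ≤ T u x} = m := by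
    rw [hmdef, hueq]
    exact measure_ge_T_plateau T hmap hequi (fun x => le_rfl)
      (hueq ▸ huS) one_pos le_rfl hAfin
  have M_u' : volume {x | (1:ℝ) ≤ T u' x} = m := by
    rw [hmdef, hu']
    exact measure_ge_T_plateau T hmap hequi (fun x => min_le_right _ _)
      (hu' ▸ hu'S) (by linarith) le_rfl hAfin
  have M_g' : volume {x | t ≤ T g' x} = m := by
    rw [hmdef, hg']
    exact measure_ge_T_plateau T hmap hequi (fun x => min_le_right _ _)
      (hg' ▸ hg'S) (by linarith) le_rfl hAfin
  have M_g : volume {x | t ≤ T g x} = m := by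
    rw [hmdef, hgdef]
    exact measure_ge_T_plateau T hmap hequi (fun x => min_le_right _ _)
      (hgdef ▸ hgS) hs2 le_rfl hAfin
  have M_f : volume {x | t ≤ T f x} = m := by
    rw [hmdef, measure_ge_T T hmap hequi hf hs2 hsfin]
  have M_mix_u' : volume {x | min t 1 ≤ T u' x} = m := by
    rw [hmdef, hu']
    exact measure_ge_T_plateau T hmap hequi (fun x => min_le_right _ _)
      (hu' ▸ hu'S) (lt_min (by linarith) (by linarith)) (min_le_right _ _) hAfin
  have M_mix_g' : volume {x | min (1:ℝ) t ≤ T g' x} = m := by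
    rw [hmdef, hg']
    exact measure_ge_T_plateau T hmap hequi (fun x => min_le_right _ _)
      (hg' ▸ hg'S) (lt_min (by linarith) (by linarith)) (min_le_right _ _) hAfin
  -- pointwise inequalities
  have h_u'_le_u : u' ≤ᵐ[volume] u := by
    refine Filter.Eventually.of_forall (fun x => ?_)
    by_cases hxA : x ∈ A
    · rw [hu', Set.piecewise_eq_of_mem _ _ _ hxA, hu, Set.indicator_of_mem hxA]
      rfl
    · rw [hu', Set.piecewise_eq_of_notMem _ _ _ hxA, hu,
        Set.indicator_of_notMem hxA]
      exact le_trans (min_le_right _ _) hα0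
  have h_g'_le_g : g' ≤ᵐ[volume] g := by
    refine Filter.Eventually.of_forall (fun x => ?_)
    by_cases hxA : x ∈ A
    · rw [hg', Set.piecewise_eq_of_mem _ _ _ hxA, hgdef,
        Set.piecewise_eq_of_mem _ _ _ hxA]
    · rw [hg', Set.piecewise_eq_of_notMem _ _ _ hxA, hgdef,
        Set.piecewise_eq_of_notMem _ _ _ hxA]
      exact min_le_min (le_refl (f x)) hαs
  have h_g_le_f : g ≤ᵐ[volume] f := by
    refine Filter.Eventually.of_forall (fun x => ?_)
    by_cases hxA : x ∈ A
    · rw [hgdef, Set.piecewise_eq_of_mem _ _ _ hxA]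
      exact hxA
    · rw [hgdef, Set.piecewise_eq_of_notMem _ _ _ hxA]
      exact min_le_left _ _
  have hmten : m ≠ ⊤ := hAfin
  -- the chain of a.e. equalities
  have step1 : {x | (1:ℝ) ≤ T u' x} =ᵐ[volume] {x | (1:ℝ) ≤ T u x} := by
    refine step_main T hmap hmono hu'S huS h_u'_le_u hmten M_u' M_u ?_
    rw [min_self]
    exact M_u
  have step2 : {x | t ≤ T g' x} =ᵐ[volume] {x | (1:ℝ) ≤ T u' x} := by
    rcases le_total t 1 with h | h
    · refine step_main T hmap hmono hg'S hu'S ?_ hmten M_g' M_u' ?_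
      · refine Filter.Eventually.of_forall (fun x => ?_)
        by_cases hxA : x ∈ A
        · rw [hg', Set.piecewise_eq_of_mem _ _ _ hxA, hu',
            Set.piecewise_eq_of_mem _ _ _ hxA]
          exact h
        · rw [hg', Set.piecewise_eq_of_notMem _ _ _ hxA, hu',
            Set.piecewise_eq_of_notMem _ _ _ hxA]
      · exact M_mix_u'
    · refine (step_main T hmap hmono hu'S hg'S ?_ hmten M_u' M_g' ?_).symm
      · refine Filter.Eventually.of_forall (fun x => ?_)
        by_cases hxA : x ∈ A
        · rw [hg', Set.piecewise_eq_of_mem _ _ _ hxA, hu',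
            Set.piecewise_eq_of_mem _ _ _ hxA]
          exact h
        · rw [hg', Set.piecewise_eq_of_notMem _ _ _ hxA, hu',
            Set.piecewise_eq_of_notMem _ _ _ hxA]
      · exact M_mix_g'
  have step3 : {x | t ≤ T g' x} =ᵐ[volume] {x | t ≤ T g x} := by
    refine step_main T hmap hmono hg'S hgS h_g'_le_g hmten M_g' M_g ?_
    rw [min_self]
    exact M_g
  have step4 : {x | t ≤ T g x} =ᵐ[volume] {x | t ≤ T f x} := by
    refine step_main T hmap hmono hgS hf h_g_le_f hmten M_g M_f ?_
    rw [min_self]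
    exact M_f
  have main : {x | t ≤ T f x} =ᵐ[volume] {x | (1:ℝ) ≤ T u x} :=
    ((step4.symm.trans step3.symm).trans step2).trans step1
  have hfinal : {x | (1:ℝ) ≤ T u x} =ᵐ[volume] {x | T u x = 1} := by
    have hnull : volume {x | (1:ℝ) < T u x} = 0 := by
      rw [hequi u huS 1]
      have hempty : {x | (1:ℝ) < u x} = (∅ : Set (EuclideanSpace ℝ (Fin n))) := by
        ext x
        simp only [mem_setOf_eq, mem_empty_iff_false, iff_false, not_lt]
        by_cases hxA : x ∈ A
        · rw [hu, Set.indicator_of_mem hxA]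
          rfl
        · rw [hu, Set.indicator_of_notMem hxA]
          linarith
      rw [hempty, measure_empty]
    have hae : ∀ᵐ x ∂(volume : Measure (EuclideanSpace ℝ (Fin n))), T u x ≤ 1 := by
      rw [ae_iff]
      simpa only [not_le] using hnull
    refine Filter.eventuallyEq_set.mpr ?_
    filter_upwards [hae] with x hx
    exact ⟨fun h => le_antisymm hx h, fun h => h.ge⟩
  exact main.trans hfinal
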